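/- Let Δ ⊂ ℝ³ be the maximal polytope of class a), namely Δ = conv{a, b, d, p} with a = (2,1,−2), b = (2,0,1), d = (2,2,1), p = (−4,−2,1). Then F(Δ) = conv{(0,0,0), (1,1/3,0), (1,2/3,0), (1,1/2,−1/2)} and Δ is, up to translation, equal to 6·F(Δ). -/

import Mathlib

noncomputable section

def pairing {n : ℕ} (x : Fin n → ℝ) (ν : Fin n → ℤ) : ℝ := ∑ i, x i * (ν i : ℝ)

def IsLatticePoint {n : ℕ} (x : Fin n → ℝ) : Prop := ∀ i, ∃ z : ℤ, x i = (z : ℝ)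

/-- `ord_Δ(ν) := min_{m ∈ Δ ∩ M} ⟨m, ν⟩`. -/
def ordL {n : ℕ} (Δ : Set (Fin n → ℝ)) (ν : Fin n → ℤ) : ℝ :=
  sInf ((fun m => pairing m ν) '' {m ∈ Δ | IsLatticePoint m})

/-- The Fine interior `F(Δ)`. -/
def FineInterior {n : ℕ} (Δ : Set (Fin n → ℝ)) : Set (Fin n → ℝ) :=
  { x | ∀ ν : Fin n → ℤ, ν ≠ 0 → ordL Δ ν + 1 ≤ pairing x ν }

/-- The maximal polytope of class a):
`Δ = conv{(2,1,−2), (2,0,1), (2,2,1), (−4,−2,1)} ⊂ ℝ³`. -/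
def Δa : Set (Fin 3 → ℝ) :=
  convexHull ℝ {![2, 1, -2], ![2, 0, 1], ![2, 2, 1], ![-4, -2, 1]}

private lemma pairing_eq (x : Fin 3 → ℝ) (ν : Fin 3 → ℤ) :
    pairing x ν = x 0 * ν 0 + x 1 * ν 1 + x 2 * ν 2 := by
  simp [pairing, Fin.sum_univ_three]

private lemma pairing_linear (ν : Fin 3 → ℤ) :
    IsLinearMap ℝ (fun x : Fin 3 → ℝ => pairing x ν) := by
  constructor
  · intro x y
    simp [pairing, add_mul, Finset.sum_add_distrib]
  · intro c x
    simp [pairing, Finset.mul_sum, mul_assoc]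

private lemma le_pairing_of_hull {s : Set (Fin 3 → ℝ)} {ν : Fin 3 → ℤ} {c : ℝ}
    (h : ∀ y ∈ s, c ≤ pairing y ν) {x : Fin 3 → ℝ} (hx : x ∈ convexHull ℝ s) :
    c ≤ pairing x ν :=
  convexHull_min h (convex_halfSpace_ge (pairing_linear ν) c) hx

private lemma vertsΔ_lattice :
    ∀ v ∈ ({![2, 1, -2], ![2, 0, 1], ![2, 2, 1], ![-4, -2, 1]} : Set (Fin 3 → ℝ)),
      IsLatticePoint v := by
  intro v hv
  simp only [Set.mem_insert_iff, Set.mem_singleton_iff] at hv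
  rcases hv with rfl | rfl | rfl | rfl <;> intro i <;> fin_cases i <;>
    simp [Matrix.vecHead, Matrix.vecTail] <;>
    first
      | exact ⟨2, ((by norm_num) : (2:ℝ) = ((2:ℤ):ℝ))⟩
      | exact ⟨1, ((by norm_num) : (1:ℝ) = ((1:ℤ):ℝ))⟩
      | exact ⟨0, ((by norm_num) : (0:ℝ) = ((0:ℤ):ℝ))⟩
      | exact ⟨-2, ((by norm_num) : (-2:ℝ) = ((-2:ℤ):ℝ))⟩
      | exact ⟨-4, ((by norm_num) : (-4:ℝ) = ((-4:ℤ):ℝ))⟩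

private lemma ordL_Δa_le (ν : Fin 3 → ℤ) (v : Fin 3 → ℝ)
    (hv : v ∈ ({![2, 1, -2], ![2, 0, 1], ![2, 2, 1], ![-4, -2, 1]} : Set (Fin 3 → ℝ))) :
    ordL Δa ν ≤ pairing v ν := by
  apply csInf_le
  · refine ⟨min (min (pairing ![2, 1, -2] ν) (pairing ![2, 0, 1] ν))
      (min (pairing ![2, 2, 1] ν) (pairing ![-4, -2, 1] ν)), ?_⟩
    rintro y ⟨m, ⟨hm, -⟩, rfl⟩
    refine le_pairing_of_hull ?_ hm
    intro z hz
    simp only [Set.mem_insert_iff, Set.mem_singleton_iff] at hz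
    rcases hz with rfl | rfl | rfl | rfl
    · exact min_le_of_left_le (min_le_left _ _)
    · exact min_le_of_left_le (min_le_right _ _)
    · exact min_le_of_right_le (min_le_left _ _)
    · exact min_le_of_right_le (min_le_right _ _)
  · exact ⟨v, ⟨subset_convexHull ℝ _ hv, vertsΔ_lattice v hv⟩, rfl⟩

private lemma le_ordL_Δa (ν : Fin 3 → ℤ) (c : ℝ)
    (h1 : c ≤ pairing ![2, 1, -2] ν) (h2 : c ≤ pairing ![2, 0, 1] ν)
    (h3 : c ≤ pairing ![2, 2, 1] ν) (h4 : c ≤ pairing ![-4, -2, 1] ν) :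
    c ≤ ordL Δa ν := by
  apply le_csInf
  · exact ⟨pairing ![2, 1, -2] ν, ⟨![2, 1, -2],
      ⟨subset_convexHull ℝ _ (by simp), vertsΔ_lattice _ (by simp)⟩, rfl⟩⟩
  · rintro y ⟨m, ⟨hm, -⟩, rfl⟩
    refine le_pairing_of_hull ?_ hm
    intro z hz
    simp only [Set.mem_insert_iff, Set.mem_singleton_iff] at hz
    rcases hz with rfl | rfl | rfl | rfl <;> assumption

private lemma part1 :
    FineInterior Δa =
      convexHull ℝ {![0, 0, 0], ![1, 1/3, 0], ![1, 2/3, 0], ![1, 1/2, -1/2]} := by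
  apply Set.Subset.antisymm
  · -- F(Δ) ⊆ hull
    intro x hx
    have key : ∀ ν : Fin 3 → ℤ, ν ≠ 0 → ∀ r : ℝ,
        (r ≤ pairing ![2, 1, -2] ν) → (r ≤ pairing ![2, 0, 1] ν) →
        (r ≤ pairing ![2, 2, 1] ν) → (r ≤ pairing ![-4, -2, 1] ν) →
        r + 1 ≤ pairing x ν := by
      intro ν hν r hr1 hr2 hr3 hr4
      have := hx ν hν
      have h5 := le_ordL_Δa ν r hr1 hr2 hr3 hr4
      linarith
    have hν1 : (![0, 0, -1] : Fin 3 → ℤ) ≠ 0 := by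
      intro h; have := congrFun h 2; simp at this
    have hν2 : (![-1, 0, 0] : Fin 3 → ℤ) ≠ 0 := by
      intro h; have := congrFun h 0; simp at this
    have hν3 : (![-1, 3, 1] : Fin 3 → ℤ) ≠ 0 := by
      intro h; have := congrFun h 1; simp at this
    have hν4 : (![2, -3, 1] : Fin 3 → ℤ) ≠ 0 := by
      intro h; have := congrFun h 0; simp at this
    have e1 := key ![0, 0, -1] hν1 (-1) (by norm_num [pairing_eq, Matrix.cons_val_two, Matrix.vecHead, Matrix.vecTail]) (by norm_num [pairing_eq, Matrix.cons_val_two, Matrix.vecHead, Matrix.vecTail])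
      (by norm_num [pairing_eq, Matrix.cons_val_two, Matrix.vecHead, Matrix.vecTail]) (by norm_num [pairing_eq, Matrix.cons_val_two, Matrix.vecHead, Matrix.vecTail])
    have e2 := key ![-1, 0, 0] hν2 (-2) (by norm_num [pairing_eq, Matrix.cons_val_two, Matrix.vecHead, Matrix.vecTail]) (by norm_num [pairing_eq, Matrix.cons_val_two, Matrix.vecHead, Matrix.vecTail])
      (by norm_num [pairing_eq, Matrix.cons_val_two, Matrix.vecHead, Matrix.vecTail]) (by norm_num [pairing_eq, Matrix.cons_val_two, Matrix.vecHead, Matrix.vecTail])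
    have e3 := key ![-1, 3, 1] hν3 (-1) (by norm_num [pairing_eq, Matrix.cons_val_two, Matrix.vecHead, Matrix.vecTail]) (by norm_num [pairing_eq, Matrix.cons_val_two, Matrix.vecHead, Matrix.vecTail])
      (by norm_num [pairing_eq, Matrix.cons_val_two, Matrix.vecHead, Matrix.vecTail]) (by norm_num [pairing_eq, Matrix.cons_val_two, Matrix.vecHead, Matrix.vecTail])
    have e4 := key ![2, -3, 1] hν4 (-1) (by norm_num [pairing_eq, Matrix.cons_val_two, Matrix.vecHead, Matrix.vecTail]) (by norm_num [pairing_eq, Matrix.cons_val_two, Matrix.vecHead, Matrix.vecTail])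
      (by norm_num [pairing_eq, Matrix.cons_val_two, Matrix.vecHead, Matrix.vecTail]) (by norm_num [pairing_eq, Matrix.cons_val_two, Matrix.vecHead, Matrix.vecTail])
    rw [pairing_eq] at e1 e2 e3 e4
    norm_num [Matrix.cons_val_two, Matrix.vecHead, Matrix.vecTail] at e1 e2 e3 e4
    have hxeq : x = ∑ i : Fin 4,
        (![1 - x 0, 2*x 0 - 3*x 1 + x 2, -x 0 + 3*x 1 + x 2, -2*x 2] : Fin 4 → ℝ) i •
        (![![0, 0, 0], ![1, 1/3, 0], ![1, 2/3, 0], ![1, 1/2, -1/2]] : Fin 4 → Fin 3 → ℝ) i := by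
      funext k
      fin_cases k <;> simp [Fin.sum_univ_four, Matrix.vecHead, Matrix.vecTail] <;> ring
    rw [hxeq]
    refine (convex_convexHull ℝ _).sum_mem ?_ ?_ ?_
    · intro i _
      fin_cases i <;> simp [Matrix.vecHead, Matrix.vecTail] <;> linarith
    · simp [Fin.sum_univ_four, Matrix.vecHead, Matrix.vecTail]
      ring
    · intro i _
      fin_cases i <;> exact subset_convexHull ℝ _ (by simp [Matrix.vecHead, Matrix.vecTail])
  · -- hull ⊆ F(Δ)
    intro x hx ν hν
    have hn : ¬(ν 0 = 0 ∧ ν 1 = 0 ∧ ν 2 = 0) := by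
      rintro ⟨h1, h2, h3⟩
      apply hν
      funext i
      fin_cases i <;> assumption
    obtain ⟨m, h1, h2, h3, h4, hc, hk⟩ :
        ∃ m : ℤ, m ≤ 2*ν 0 + ν 1 - 2*ν 2 ∧ m ≤ 2*ν 0 + ν 2 ∧ m ≤ 2*ν 0 + 2*ν 1 + ν 2 ∧
          m ≤ -4*ν 0 - 2*ν 1 + ν 2 ∧
          (m = 2*ν 0 + ν 1 - 2*ν 2 ∨ m = 2*ν 0 + ν 2 ∨ m = 2*ν 0 + 2*ν 1 + ν 2 ∨
            m = -4*ν 0 - 2*ν 1 + ν 2) ∧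
          5*m + (-4*ν 0 - 2*ν 1 + ν 2) ≤ -6 :=
      ⟨min (min (2*ν 0 + ν 1 - 2*ν 2) (2*ν 0 + ν 2))
        (min (2*ν 0 + 2*ν 1 + ν 2) (-4*ν 0 - 2*ν 1 + ν 2)),
        by omega, by omega, by omega, by omega, by omega, by omega⟩
    -- real versions
    have c1 : (m : ℝ) ≤ 2*(ν 0 : ℝ) + (ν 1 : ℝ) - 2*(ν 2 : ℝ) := by exact_mod_cast h1
    have c2 : (m : ℝ) ≤ 2*(ν 0 : ℝ) + (ν 2 : ℝ) := by exact_mod_cast h2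
    have c3 : (m : ℝ) ≤ 2*(ν 0 : ℝ) + 2*(ν 1 : ℝ) + (ν 2 : ℝ) := by exact_mod_cast h3
    have c4 : (m : ℝ) ≤ -4*(ν 0 : ℝ) - 2*(ν 1 : ℝ) + (ν 2 : ℝ) := by exact_mod_cast h4
    have ck : 5*(m : ℝ) + (-4*(ν 0 : ℝ) - 2*(ν 1 : ℝ) + (ν 2 : ℝ)) ≤ -6 := by
      exact_mod_cast hk
    have hord : ordL Δa ν ≤ (m : ℝ) := by
      rcases hc with h | h | h | h
      · refine le_trans (ordL_Δa_le ν ![2, 1, -2] (by simp)) (le_of_eq ?_)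
        rw [h]
        push_cast
        rw [pairing_eq]
        norm_num [Matrix.cons_val_two, Matrix.vecHead, Matrix.vecTail]
        try ring
      · refine le_trans (ordL_Δa_le ν ![2, 0, 1] (by simp)) (le_of_eq ?_)
        rw [h]
        push_cast
        rw [pairing_eq]
        norm_num [Matrix.cons_val_two, Matrix.vecHead, Matrix.vecTail]
      · refine le_trans (ordL_Δa_le ν ![2, 2, 1] (by simp)) (le_of_eq ?_)
        rw [h]
        push_cast
        rw [pairing_eq]
        norm_num [Matrix.cons_val_two, Matrix.vecHead, Matrix.vecTail]
        try ring
      · refine le_trans (ordL_Δa_le ν ![-4, -2, 1] (by simp)) (le_of_eq ?_)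
        rw [h]
        push_cast
        rw [pairing_eq]
        norm_num [Matrix.cons_val_two, Matrix.vecHead, Matrix.vecTail]
        try ring
    have hpair : ((m : ℝ) - (-4*(ν 0 : ℝ) - 2*(ν 1 : ℝ) + (ν 2 : ℝ))) / 6 ≤ pairing x ν := by
      refine le_pairing_of_hull ?_ hx
      intro z hz
      simp only [Set.mem_insert_iff, Set.mem_singleton_iff] at hz
      rcases hz with rfl | rfl | rfl | rfl
      · have h0 : pairing ![0, 0, 0] ν = 0 := by norm_num [pairing_eq, Matrix.cons_val_two, Matrix.vecHead, Matrix.vecTail]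
        rw [h0]; linarith
      · have h0 : pairing ![1, 1/3, 0] ν = (ν 0 : ℝ) + (ν 1 : ℝ)/3 := by
          rw [pairing_eq]; norm_num [Matrix.cons_val_two, Matrix.vecHead, Matrix.vecTail]; try ring
        rw [h0]; linarith
      · have h0 : pairing ![1, 2/3, 0] ν = (ν 0 : ℝ) + 2*(ν 1 : ℝ)/3 := by
          rw [pairing_eq]; norm_num [Matrix.cons_val_two, Matrix.vecHead, Matrix.vecTail]; try ring
        rw [h0]; linarith
      · have h0 : pairing ![1, 1/2, -1/2] ν = (ν 0 : ℝ) + (ν 1 : ℝ)/2 - (ν 2 : ℝ)/2 := by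
          rw [pairing_eq]; norm_num [Matrix.cons_val_two, Matrix.vecHead, Matrix.vecTail]; try ring
        rw [h0]; linarith
    linarith

/-- For the maximal polytope of class a),
`F(Δ) = conv{(0,0,0), (1,1/3,0), (1,2/3,0), (1,1/2,−1/2)}` and `Δ` is, up to
translation, equal to the dilation `6·F(Δ)`. -/
theorem fineInterior_classA_max_and_dilation :
    FineInterior Δa =
      convexHull ℝ {![0, 0, 0], ![1, 1/3, 0], ![1, 2/3, 0], ![1, 1/2, -1/2]} ∧
    ∃ c : Fin 3 → ℝ, Δa = (fun x => (6 : ℝ) • x + c) '' FineInterior Δa := by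
  refine ⟨part1, ![-4, -2, 1], ?_⟩
  rw [part1]
  let f : (Fin 3 → ℝ) →ᵃ[ℝ] (Fin 3 → ℝ) :=
    { toFun := fun x => (6 : ℝ) • x + ![-4, -2, 1]
      linear := (6 : ℝ) • LinearMap.id
      map_vadd' := by
        intro p v
        simp [smul_add]
        abel
        exact ⟨trivial, trivial, trivial⟩ }
  have himg := f.image_convexHull
    ({![0, 0, 0], ![1, 1/3, 0], ![1, 2/3, 0], ![1, 1/2, -1/2]} : Set (Fin 3 → ℝ))
  show Δa = f '' (convexHull ℝ _)
  rw [himg]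
  unfold Δa
  congr 1
  have h0 : f ![0, 0, 0] = ![-4, -2, 1] := by
    funext i; fin_cases i <;> simp [f, Matrix.vecHead, Matrix.vecTail] <;> norm_num
  have h1 : f ![1, 1/3, 0] = ![2, 0, 1] := by
    funext i; fin_cases i <;> simp [f, Matrix.vecHead, Matrix.vecTail] <;> norm_num
  have h2 : f ![1, 2/3, 0] = ![2, 2, 1] := by
    funext i; fin_cases i <;> simp [f, Matrix.vecHead, Matrix.vecTail] <;> norm_num
  have h3 : f ![1, 1/2, -1/2] = ![2, 1, -2] := by
    funext i; fin_cases i <;> simp [f, Matrix.vecHead, Matrix.vecTail] <;> norm_num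
  rw [Set.image_insert_eq, Set.image_insert_eq, Set.image_insert_eq, Set.image_singleton,
    h0, h1, h2, h3]
  ext y
  simp only [Set.mem_insert_iff, Set.mem_singleton_iff]
  tauto
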